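/- Let P and Q be random d×M real matrices on a probability space such that all entries of P Pᵀ, P Qᵀ and Q Qᵀ are integrable, and suppose E[Q Qᵀ] is invertible. Then E[P Qᵀ] (E[Q Qᵀ])⁻¹ E[Q Pᵀ] ⪯ E[P Pᵀ] in the Loewner order. -/

import Mathlib

open MeasureTheory Matrix

/-- Entrywise expectation of a random matrix. -/
noncomputable def matExp {Ω : Type*} [MeasurableSpace Ω] (μ : Measure Ω)
    {m n : Type*} (f : Ω → Matrix m n ℝ) : Matrix m n ℝ :=
  Matrix.of fun i j => ∫ ω, f ω i j ∂μ

set_option linter.unusedSectionVars false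

section Helpers

variable {Ω : Type*} [MeasurableSpace Ω] {μ : Measure Ω} {m n p : Type*}
  [Fintype m] [Fintype n] [Fintype p] [DecidableEq m] [DecidableEq n]

lemma matExp_sub (f g : Ω → Matrix m n ℝ)
    (hf : ∀ i j, Integrable (fun ω => f ω i j) μ)
    (hg : ∀ i j, Integrable (fun ω => g ω i j) μ) :
    matExp μ (fun ω => f ω - g ω) = matExp μ f - matExp μ g := by
  ext i j
  simp only [matExp, Matrix.sub_apply, Matrix.of_apply]
  exact integral_sub (hf i j) (hg i j)

lemma integrable_mulLeft (C : Matrix p n ℝ) (f : Ω → Matrix n m ℝ)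
    (hf : ∀ i j, Integrable (fun ω => f ω i j) μ) :
    ∀ i j, Integrable (fun ω => (C * f ω) i j) μ := by
  intro i j
  simp only [Matrix.mul_apply]
  exact integrable_finset_sum _ fun k _ => (hf k j).const_mul _

lemma integrable_mulRight (C : Matrix n p ℝ) (f : Ω → Matrix m n ℝ)
    (hf : ∀ i j, Integrable (fun ω => f ω i j) μ) :
    ∀ i j, Integrable (fun ω => (f ω * C) i j) μ := by
  intro i j
  simp only [Matrix.mul_apply]
  exact integrable_finset_sum _ fun k _ => (hf i k).mul_const _

lemma matExp_mulLeft (C : Matrix p n ℝ) (f : Ω → Matrix n m ℝ)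
    (hf : ∀ i j, Integrable (fun ω => f ω i j) μ) :
    matExp μ (fun ω => C * f ω) = C * matExp μ f := by
  ext i j
  simp only [matExp, Matrix.mul_apply, Matrix.of_apply]
  rw [integral_finset_sum _ fun k _ => (hf k j).const_mul _]
  simp [integral_const_mul]

lemma matExp_mulRight (C : Matrix n p ℝ) (f : Ω → Matrix m n ℝ)
    (hf : ∀ i j, Integrable (fun ω => f ω i j) μ) :
    matExp μ (fun ω => f ω * C) = matExp μ f * C := by
  ext i j
  simp only [matExp, Matrix.mul_apply, Matrix.of_apply]
  rw [integral_finset_sum _ fun k _ => (hf i k).mul_const _]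
  simp [integral_mul_const]

lemma matExp_posSemidef (f : Ω → Matrix n n ℝ)
    (hf : ∀ i j, Integrable (fun ω => f ω i j) μ)
    (hpsd : ∀ ω, (f ω).PosSemidef) :
    (matExp μ f).PosSemidef := by
  refine Matrix.posSemidef_iff_dotProduct_mulVec.mpr ⟨?_, ?_⟩
  · ext i j
    simp only [matExp, Matrix.conjTranspose_apply, Matrix.of_apply, star_trivial]
    congr 1
    ext ω
    exact congrFun (congrFun (hpsd ω).isHermitian i) j ▸ rfl
  · intro x
    have key : ∫ ω, star x ⬝ᵥ (f ω) *ᵥ x ∂μ = star x ⬝ᵥ (matExp μ f) *ᵥ x := by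
      simp only [dotProduct, mulVec, matExp, of_apply, star_trivial]
      rw [integral_finset_sum]
      · refine Finset.sum_congr rfl fun i _ => ?_
        rw [integral_const_mul]
        congr 1
        rw [integral_finset_sum _ fun j _ => (hf i j).mul_const _]
        simp [integral_mul_const]
      · exact fun i _ => (integrable_finset_sum _ fun j _ => (hf i j).mul_const _).const_mul _
    rw [← key]
    exact integral_nonneg fun ω => (hpsd ω).dotProduct_mulVec_nonneg x

end Helpers

/-- Matrix Cauchy–Schwarz inequality for random matrices:
`E[PQᵀ] (E[QQᵀ])⁻¹ E[QPᵀ] ⪯ E[PPᵀ]` in the Loewner order. -/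
theorem random_matrix_cauchy_schwarz
    {Ω : Type*} [MeasurableSpace Ω] (μ : Measure Ω) [IsProbabilityMeasure μ]
    {d M : ℕ}
    (P Q : Ω → Matrix (Fin d) (Fin M) ℝ)
    (hPP : ∀ i j, Integrable (fun ω => (P ω * (P ω)ᵀ) i j) μ)
    (hPQ : ∀ i j, Integrable (fun ω => (P ω * (Q ω)ᵀ) i j) μ)
    (hQQ : ∀ i j, Integrable (fun ω => (Q ω * (Q ω)ᵀ) i j) μ)
    (hinv : IsUnit (matExp μ fun ω => Q ω * (Q ω)ᵀ)) :
    ((matExp μ fun ω => P ω * (P ω)ᵀ) -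
      (matExp μ fun ω => P ω * (Q ω)ᵀ) * (matExp μ fun ω => Q ω * (Q ω)ᵀ)⁻¹ *
        (matExp μ fun ω => Q ω * (P ω)ᵀ)).PosSemidef := by
  set S : Matrix (Fin d) (Fin d) ℝ := matExp μ (fun ω => Q ω * (Q ω)ᵀ) with hS
  set EPQ : Matrix (Fin d) (Fin d) ℝ := matExp μ (fun ω => P ω * (Q ω)ᵀ) with hEPQ
  set EQP : Matrix (Fin d) (Fin d) ℝ := matExp μ (fun ω => Q ω * (P ω)ᵀ) with hEQP
  set EPP : Matrix (Fin d) (Fin d) ℝ := matExp μ (fun ω => P ω * (P ω)ᵀ) with hEPP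
  set C : Matrix (Fin d) (Fin d) ℝ := EPQ * S⁻¹ with hC
  have hQP : ∀ i j, Integrable (fun ω => (Q ω * (P ω)ᵀ) i j) μ := by
    intro i j
    have h := hPQ j i
    simp only [Matrix.mul_apply, Matrix.transpose_apply] at h ⊢
    simpa [mul_comm] using h
  -- symmetry facts
  have hSsym : Sᵀ = S := by
    ext i j
    simp only [hS, matExp, Matrix.transpose_apply, Matrix.of_apply, Matrix.mul_apply,
      Matrix.transpose_apply]
    congr 1; ext ω; exact Finset.sum_congr rfl fun k _ => mul_comm _ _
  have hPQT : EPQᵀ = EQP := by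
    ext i j
    simp only [hEPQ, hEQP, matExp, Matrix.transpose_apply, Matrix.of_apply, Matrix.mul_apply,
      Matrix.transpose_apply]
    congr 1; ext ω; exact Finset.sum_congr rfl fun k _ => mul_comm _ _
  have hdet : IsUnit S.det := (Matrix.isUnit_iff_isUnit_det S).mp hinv
  have hSinvS : S⁻¹ * S = 1 := Matrix.nonsing_inv_mul S hdet
  have hCT : Cᵀ = S⁻¹ * EQP := by
    rw [hC, Matrix.transpose_mul, Matrix.transpose_nonsing_inv, hSsym, hPQT]
  -- the residual matrix
  have expand : ∀ ω, (P ω - C * Q ω) * (P ω - C * Q ω)ᵀ =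
      (P ω * (P ω)ᵀ - C * (Q ω * (P ω)ᵀ)) -
        ((P ω * (Q ω)ᵀ) * Cᵀ - C * ((Q ω * (Q ω)ᵀ) * Cᵀ)) := by
    intro ω
    simp only [Matrix.transpose_sub, Matrix.transpose_mul, Matrix.sub_mul, Matrix.mul_sub,
      Matrix.mul_assoc]
  have hRR : ∀ i j, Integrable (fun ω => ((P ω - C * Q ω) * (P ω - C * Q ω)ᵀ) i j) μ := by
    intro i j
    simp only [expand]
    exact ((hPP i j).sub (integrable_mulLeft C _ hQP i j)).sub
      (((integrable_mulRight Cᵀ _ hPQ i j)).sub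
        (integrable_mulLeft C _ (integrable_mulRight Cᵀ _ hQQ) i j))
  have hpsd : ∀ ω, ((P ω - C * Q ω) * (P ω - C * Q ω)ᵀ).PosSemidef := by
    intro ω
    have h := Matrix.posSemidef_self_mul_conjTranspose (P ω - C * Q ω)
    have he : (P ω - C * Q ω)ᴴ = (P ω - C * Q ω)ᵀ := by
      ext i j; simp only [Matrix.conjTranspose_apply, Matrix.transpose_apply, star_trivial]
    rwa [he] at h
  have hA : ∀ i j, Integrable (fun ω => (P ω * (P ω)ᵀ - C * (Q ω * (P ω)ᵀ)) i j) μ := by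
    intro i j
    simp only [Matrix.sub_apply]
    exact (hPP i j).sub (integrable_mulLeft C _ hQP i j)
  have hB : ∀ i j,
      Integrable (fun ω => (P ω * (Q ω)ᵀ * Cᵀ - C * (Q ω * (Q ω)ᵀ * Cᵀ)) i j) μ := by
    intro i j
    simp only [Matrix.sub_apply]
    exact (integrable_mulRight Cᵀ _ hPQ i j).sub
      (integrable_mulLeft C _ (integrable_mulRight Cᵀ _ hQQ) i j)
  have e1 : matExp μ (fun ω => P ω * (P ω)ᵀ - C * (Q ω * (P ω)ᵀ)) = EPP - C * EQP := by
    rw [matExp_sub (f := fun ω => P ω * (P ω)ᵀ) (g := fun ω => C * (Q ω * (P ω)ᵀ)) hPP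
        (integrable_mulLeft C _ hQP), matExp_mulLeft C _ hQP]
  have e2 : matExp μ (fun ω => P ω * (Q ω)ᵀ * Cᵀ - C * (Q ω * (Q ω)ᵀ * Cᵀ)) =
      EPQ * Cᵀ - C * (S * Cᵀ) := by
    rw [matExp_sub (f := fun ω => P ω * (Q ω)ᵀ * Cᵀ) (g := fun ω => C * (Q ω * (Q ω)ᵀ * Cᵀ))
        (integrable_mulRight Cᵀ _ hPQ)
        (integrable_mulLeft C _ (integrable_mulRight Cᵀ _ hQQ)),
      matExp_mulRight Cᵀ _ hPQ,
      matExp_mulLeft C (fun ω => Q ω * (Q ω)ᵀ * Cᵀ) (integrable_mulRight Cᵀ _ hQQ),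
      matExp_mulRight Cᵀ _ hQQ]
  have hEq : matExp μ (fun ω => (P ω - C * Q ω) * (P ω - C * Q ω)ᵀ) =
      EPP - C * EQP - (EPQ * Cᵀ - C * (S * Cᵀ)) := by
    rw [show (fun ω => (P ω - C * Q ω) * (P ω - C * Q ω)ᵀ) =
        (fun ω => (P ω * (P ω)ᵀ - C * (Q ω * (P ω)ᵀ)) -
          ((P ω * (Q ω)ᵀ * Cᵀ) - C * (Q ω * (Q ω)ᵀ * Cᵀ))) from funext expand]
    rw [matExp_sub (f := fun ω => P ω * (P ω)ᵀ - C * (Q ω * (P ω)ᵀ))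
        (g := fun ω => P ω * (Q ω)ᵀ * Cᵀ - C * (Q ω * (Q ω)ᵀ * Cᵀ)) hA hB, e1, e2]
  have hkey : S * (S⁻¹ * EQP) = EQP := by
    rw [← Matrix.mul_assoc, Matrix.mul_nonsing_inv S hdet, Matrix.one_mul]
  have halg : EPP - C * EQP - (EPQ * Cᵀ - C * (S * Cᵀ)) = EPP - EPQ * S⁻¹ * EQP := by
    rw [hCT, hC]
    simp only [Matrix.mul_assoc, hkey]
    abel
  rw [show EPP - EPQ * S⁻¹ * EQP =
      matExp μ (fun ω => (P ω - C * Q ω) * (P ω - C * Q ω)ᵀ) by rw [hEq, halg]]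
  exact matExp_posSemidef _ hRR hpsd
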